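/- Let u : ℝ → ℝ be twice continuously differentiable with u'' = q u on ℝ, where |q(x)| ≤ M for all x. Then for every x₀ ∈ ℝ, ∫_{x₀−1}^{x₀+1} |u'(x)| dx ≤ C ∫_{x₀−2}^{x₀+2} |u(x)| dx, where C depends only on M. -/

import Mathlib

open MeasureTheory intervalIntegral

theorem local_derivative_estimate (M : ℝ) (hM : 0 ≤ M) :
    ∃ C > 0, ∀ q u u' : ℝ → ℝ,
      (∀ x, |q x| ≤ M) →
      (∀ x, HasDerivAt u (u' x) x) →
      (∀ x, HasDerivAt u' (q x * u x) x) →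
      Continuous u' →
      ∀ x₀ : ℝ,
        (∫ x in (x₀ - 1)..(x₀ + 1), |u' x|) ≤ C * ∫ x in (x₀ - 2)..(x₀ + 2), |u x| := by
  refine ⟨2 * M + 2, by positivity, ?_⟩
  intro q u u' hq hu hu' hu'c x₀
  have hu_cont : Continuous u := by
    have : Differentiable ℝ u := fun x => (hu x).differentiableAt
    exact this.continuous
  set I := ∫ x in (x₀ - 2)..(x₀ + 2), |u x| with hIdef
  have huabs_int : ∀ a b : ℝ, IntervalIntegrable (fun x => |u x|) volume a b :=
    fun a b => (hu_cont.abs).intervalIntegrable a b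
  -- measurability of q*u as a derivative
  have hqu_eq : (fun x => q x * u x) = deriv u' := by
    funext x; exact ((hu' x).deriv).symm
  have hqu_meas : Measurable fun x => q x * u x := by
    rw [hqu_eq]; exact measurable_deriv u'
  have hqu_int : ∀ a b : ℝ, IntervalIntegrable (fun x => q x * u x) volume a b := by
    intro a b
    refine ((hu_cont.abs.const_smul M).intervalIntegrable a b).mono_fun
      hqu_meas.aestronglyMeasurable.restrict (Filter.Eventually.of_forall fun x => ?_)
    simp only [Real.norm_eq_abs, abs_mul, Pi.smul_apply, smul_eq_mul]
    rw [abs_abs, abs_of_nonneg hM]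
    exact mul_le_mul_of_nonneg_right (hq x) (abs_nonneg _)
  -- subinterval bound
  have key : ∀ a b : ℝ, x₀ - 2 ≤ a → a ≤ b → b ≤ x₀ + 2 → (∫ x in a..b, |u x|) ≤ I :=
    fun a b h1 h2 h3 =>
      integral_mono_interval h1 h2 h3
        (Filter.Eventually.of_forall fun x => abs_nonneg _) (huabs_int _ _)
  have hI0 : 0 ≤ I := by
    rw [hIdef]
    apply integral_nonneg (by linarith) (fun x _ => abs_nonneg _)
  -- pointwise bound on the middle interval
  have ptwise : ∀ x ∈ Set.Icc (x₀ - 1) (x₀ + 1), |u' x| ≤ |u (x + 1)| + |u x| + M * I := by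
    intro x hx
    obtain ⟨hx1, hx2⟩ := hx
    -- u'(t) - u'(x) = ∫ q u on x..t
    have hdiff : ∀ t : ℝ, u' t - u' x = ∫ s in x..t, q s * u s := by
      intro t
      rw [integral_eq_sub_of_hasDerivAt (fun s _ => hu' s) (hqu_int x t)]
    have hrem : ∀ t ∈ Set.uIoc x (x + 1), ‖u' t - u' x‖ ≤ M * I := by
      intro t ht
      rw [Set.uIoc_of_le (by linarith), Set.mem_Ioc] at ht
      rw [Real.norm_eq_abs, hdiff t]
      calc |∫ s in x..t, q s * u s| ≤ ∫ s in x..t, |q s * u s| := by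
            exact abs_integral_le_integral_abs ht.1.le
        _ ≤ ∫ s in x..t, M * |u s| := by
            refine integral_mono_on ht.1.le ((hqu_int x t).abs)
              ((hu_cont.abs.const_smul M).intervalIntegrable x t) fun s _ => ?_
            rw [abs_mul]
            exact mul_le_mul_of_nonneg_right (hq s) (abs_nonneg _)
        _ = M * ∫ s in x..t, |u s| := by rw [intervalIntegral.integral_const_mul]
        _ ≤ M * I := by
            refine mul_le_mul_of_nonneg_left (key x t (by linarith) ht.1.le (by linarith)) hM
    -- FTC for u
    have hftc : (∫ t in x..(x + 1), u' t) = u (x + 1) - u x :=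
      integral_eq_sub_of_hasDerivAt (fun t _ => hu t) (hu'c.intervalIntegrable x (x + 1))
    have hsplit : (∫ t in x..(x + 1), (u' t - u' x)) = (u (x + 1) - u x) - u' x := by
      rw [intervalIntegral.integral_sub (hu'c.intervalIntegrable x (x + 1))
        (intervalIntegrable_const), hftc]
      simp
    have hbound : ‖∫ t in x..(x + 1), (u' t - u' x)‖ ≤ M * I * |x + 1 - x| :=
      intervalIntegral.norm_integral_le_of_norm_le_const hrem
    have : |u' x| ≤ |u (x + 1) - u x| + M * I := by
      have h1 : u' x = (u (x + 1) - u x) - ∫ t in x..(x + 1), (u' t - u' x) := by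
        rw [hsplit]; ring
      rw [h1]
      have := hbound
      simp only [add_sub_cancel_left, abs_one, mul_one, Real.norm_eq_abs] at this
      calc |(u (x + 1) - u x) - ∫ t in x..(x + 1), (u' t - u' x)|
          ≤ |u (x + 1) - u x| + |∫ t in x..(x + 1), (u' t - u' x)| := abs_sub _ _
        _ ≤ |u (x + 1) - u x| + M * I := by linarith
    calc |u' x| ≤ |u (x + 1) - u x| + M * I := this
      _ ≤ (|u (x + 1)| + |u x|) + M * I := by
          have := abs_sub (u (x + 1)) (u x); linarith
      _ = |u (x + 1)| + |u x| + M * I := by ring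
  -- integrate the pointwise bound
  have hmono : (∫ x in (x₀ - 1)..(x₀ + 1), |u' x|)
      ≤ ∫ x in (x₀ - 1)..(x₀ + 1), (|u (x + 1)| + |u x| + M * I) := by
    refine integral_mono_on (by linarith) ((hu'c.abs).intervalIntegrable _ _)
      (((((hu_cont.comp (continuous_id.add continuous_const)).abs).add
        hu_cont.abs).add continuous_const).intervalIntegrable _ _) ptwise
  have hsum : (∫ x in (x₀ - 1)..(x₀ + 1), (|u (x + 1)| + |u x| + M * I))
      = (∫ x in (x₀ - 1)..(x₀ + 1), |u (x + 1)|)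
        + (∫ x in (x₀ - 1)..(x₀ + 1), |u x|)
        + (M * I) * ((x₀ + 1) - (x₀ - 1)) := by
    rw [intervalIntegral.integral_add, intervalIntegral.integral_add,
      intervalIntegral.integral_const, smul_eq_mul, mul_comm]
    · exact ((hu_cont.comp (continuous_id.add continuous_const)).abs).intervalIntegrable _ _
    · exact hu_cont.abs.intervalIntegrable _ _
    · exact (((hu_cont.comp (continuous_id.add continuous_const)).abs).add
        hu_cont.abs).intervalIntegrable _ _
    · exact intervalIntegrable_const
  have hshift : (∫ x in (x₀ - 1)..(x₀ + 1), |u (x + 1)|)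
      = ∫ x in (x₀ - 1 + 1)..(x₀ + 1 + 1), |u x| :=
    intervalIntegral.integral_comp_add_right (fun x => |u x|) 1
  have h1 : (∫ x in (x₀ - 1)..(x₀ + 1), |u (x + 1)|) ≤ I := by
    rw [hshift]
    exact key _ _ (by linarith) (by linarith) (by linarith)
  have h2 : (∫ x in (x₀ - 1)..(x₀ + 1), |u x|) ≤ I :=
    key _ _ (by linarith) (by linarith) (by linarith)
  have hlen : (x₀ + 1) - (x₀ - 1) = (2 : ℝ) := by ring
  calc (∫ x in (x₀ - 1)..(x₀ + 1), |u' x|)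
      ≤ (∫ x in (x₀ - 1)..(x₀ + 1), |u (x + 1)|)
        + (∫ x in (x₀ - 1)..(x₀ + 1), |u x|) + (M * I) * ((x₀ + 1) - (x₀ - 1)) := by
        rw [← hsum]; exact hmono
    _ ≤ I + I + (M * I) * 2 := by
        rw [hlen]
        have : 0 ≤ M * I := mul_nonneg hM hI0
        linarith
    _ = (2 * M + 2) * I := by ring
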